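/- arXiv:1501.03182 — 4 statements merged into one kernel-verified Lean document; each statement's English description precedes it below -/
import Mathlib

section
/- Let A > C > B > 0 and suppose some vector x ∈ ℝ⁴ induces a q-basis. Then there exists a vector y ∈ ℝ⁴ inducing a q-basis such that g(y,qy) = 0 and g(y,q²y) = 0; that is, {y, qy, q²y, q³y} is a g-orthogonal q-basis of ℝ⁴ (orthogonality of the remaining pairs follows since q is a g-isometry). -/
noncomputable section

/-- `V` is the model space `ℝ⁴`. -/
abbrev V : Type := Fin 4 → ℝ

/-- The cyclic-shift map `q(x₁,x₂,x₃,x₄) = (x₂,x₃,x₄,x₁)`. -/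
def q (x : V) : V := fun i => x (i + 1)

/-- The circulant matrix with rows `(A,B,C,B), (B,A,B,C), (C,B,A,B), (B,C,B,A)`. -/
def G (A B C : ℝ) : Matrix (Fin 4) (Fin 4) ℝ :=
  !![A, B, C, B; B, A, B, C; C, B, A, B; B, C, B, A]

/-- The bilinear form on `ℝ⁴` whose matrix in the standard basis is `G A B C`. -/
def g (A B C : ℝ) (x y : V) : ℝ :=
  dotProduct x (Matrix.mulVec (G A B C) y)

/-- `x` induces a `q`-basis if `{x, qx, q²x, q³x}` is linearly independent. -/
def inducesQBasis (x : V) : Prop :=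
  LinearIndependent ℝ ![x, q x, q (q x), q (q (q x))]

/-- The angle between `a` and `b` measured with respect to `g`. -/
def angle (A B C : ℝ) (a b : V) : ℝ :=
  Real.arccos (g A B C a b / Real.sqrt (g A B C a a * g A B C b b))

/-- `R` is multilinear (linear in each of its four arguments). -/
def MultilinearR (R : V → V → V → V → ℝ) : Prop :=
  (∀ a a' y z u, R (a + a') y z u = R a y z u + R a' y z u) ∧
  (∀ (c : ℝ) a y z u, R (c • a) y z u = c * R a y z u) ∧
  (∀ x a a' z u, R x (a + a') z u = R x a z u + R x a' z u) ∧
  (∀ (c : ℝ) x a z u, R x (c • a) z u = c * R x a z u) ∧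
  (∀ x y a a' u, R x y (a + a') u = R x y a u + R x y a' u) ∧
  (∀ (c : ℝ) x y a u, R x y (c • a) u = c * R x y a u) ∧
  (∀ x y z a a', R x y z (a + a') = R x y z a + R x y z a') ∧
  (∀ (c : ℝ) x y z a, R x y z (c • a) = c * R x y z a)

/-- `R` has the symmetries of a Riemannian curvature tensor of type `(0,4)`. -/
def CurvSymm (R : V → V → V → V → ℝ) : Prop :=
  (∀ x y z u, R x y z u = - R y x z u) ∧
  (∀ x y z u, R x y z u = - R x y u z) ∧
  (∀ x y z u, R x y z u = R z u x y) ∧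
  (∀ x y z u, R x y z u + R y z x u + R z x y u = 0)

/-- The sectional curvature of the plane spanned by `a` and `b`. -/
def mu (A B C : ℝ) (R : V → V → V → V → ℝ) (a b : V) : ℝ :=
  R a b a b / (g A B C a a * g A B C b b - (g A B C a b) ^ 2)

lemma q_vec (a b c d : ℝ) : q ![a, b, c, d] = ![b, c, d, a] := by
  funext i
  fin_cases i <;> simp [q]

lemma g_vec (A B C a b c d e f h k : ℝ) :
    g A B C ![a,b,c,d] ![e,f,h,k] =
      a*(A*e+B*f+C*h+B*k) + b*(B*e+A*f+B*h+C*k) + c*(C*e+B*f+A*h+B*k)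
        + d*(B*e+C*f+B*h+A*k) := by
  simp [g, G, dotProduct, Matrix.mulVec, Fin.sum_univ_four, Matrix.cons_val_zero,
    Matrix.cons_val_one]

lemma indep_vec (a b c d : ℝ)
    (hdet : (a+b+c+d) * (a-b+c-d) * ((a-c)^2 + (b-d)^2) ≠ 0) :
    inducesQBasis ![a,b,c,d] := by
  unfold inducesQBasis
  rw [q_vec, q_vec, q_vec]
  have : (![![a,b,c,d], ![b,c,d,a], ![c,d,a,b], ![d,a,b,c]] : Fin 4 → V)
      = fun i => (Matrix.of ![![a,b,c,d], ![b,c,d,a], ![c,d,a,b], ![d,a,b,c]]) i := rfl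
  rw [this]
  apply Matrix.linearIndependent_rows_iff_isUnit.2
  rw [Matrix.isUnit_iff_isUnit_det, isUnit_iff_ne_zero]
  have : (Matrix.of ![![a,b,c,d], ![b,c,d,a], ![c,d,a,b], ![d,a,b,c]]).det
      = -((a+b+c+d) * (a-b+c-d) * ((a-c)^2 + (b-d)^2)) := by
    have : (Matrix.of ![![a,b,c,d], ![b,c,d,a], ![c,d,a,b], ![d,a,b,c]])
        = !![a,b,c,d; b,c,d,a; c,d,a,b; d,a,b,c] := by
      funext i j; fin_cases i <;> fin_cases j <;> rfl
    rw [this]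
    rw [Matrix.det_succ_row_zero]
    simp [Fin.sum_univ_succ, Matrix.det_succ_row_zero]
    simp [Fin.succAbove, Fin.lt_def]
    ring
  rw [this]; exact neg_ne_zero.2 hdet

theorem stmt4 (A B C : ℝ) (h1 : A > C) (h2 : C > B) (h3 : B > 0) (x : V)
    (hx : inducesQBasis x) :
    ∃ y : V, inducesQBasis y ∧ g A B C y (q y) = 0 ∧ g A B C y (q (q y)) = 0 := by
  set l0 : ℝ := A + 2*B + C with hl0
  set l2 : ℝ := A - 2*B + C with hl2
  have hl0pos : 0 < l0 := by nlinarith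
  have hl2pos : 0 < l2 := by nlinarith
  have hACpos : 0 < A - C := by linarith
  set s : ℝ := Real.sqrt (l0 * l2) with hs
  set t : ℝ := Real.sqrt (l0 / (A - C)) with ht
  have hs2 : s ^ 2 = l0 * l2 := Real.sq_sqrt (by positivity)
  have ht2 : t ^ 2 = l0 / (A - C) := Real.sq_sqrt (by positivity)
  have ht2' : t ^ 2 * (A - C) = l0 := by rw [ht2]; field_simp
  have hspos : 0 < s := Real.sqrt_pos.2 (by positivity)
  have htpos : 0 < t := Real.sqrt_pos.2 (by positivity)
  refine ⟨![l2 + s + 2*l2*t, l2 - s, l2 + s - 2*l2*t, l2 - s], ?_, ?_, ?_⟩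
  · apply indep_vec
    have e1 : (l2 + s + 2*l2*t) + (l2 - s) + (l2 + s - 2*l2*t) + (l2 - s) = 4 * l2 := by ring
    have e2 : (l2 + s + 2*l2*t) - (l2 - s) + (l2 + s - 2*l2*t) - (l2 - s) = 4 * s := by ring
    have e3 : ((l2 + s + 2*l2*t) - (l2 + s - 2*l2*t))^2 + ((l2 - s) - (l2 - s))^2
        = 16 * l2^2 * t^2 := by ring
    rw [e1, e2, e3]
    positivity
  · rw [q_vec, g_vec]
    linear_combination (-4*l2) * hs2
  · rw [q_vec, q_vec, g_vec]
    linear_combination (4*l2) * hs2 + (-8*l2^2) * ht2'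
end
end

section
/- Assume R(x,y,qz,qu) = R(x,y,z,u) for all x,y,z,u. Assume A > C > B > 0 and let u be a vector inducing a q-basis. Then the sectional curvature of the plane spanned by u and q²u vanishes: μ(u,q²u) = 0 (indeed R(u,q²u,u,q²u) = 0). -/
noncomputable section

theorem stmt10 (A B C : ℝ) (R : V → V → V → V → ℝ)
    (hml : MultilinearR R) (hsym : CurvSymm R)
    (hq : ∀ x y z u, R x y (q z) (q u) = R x y z u)
    (h1 : A > C) (h2 : C > B) (h3 : B > 0)
    (u : V) (hu : inducesQBasis u) :
    mu A B C R u (q (q u)) = 0 ∧ R u (q (q u)) u (q (q u)) = 0 := by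
  have q4 : ∀ x : V, q (q (q (q x))) = x := by
    intro x
    funext i
    show x (i + 1 + 1 + 1 + 1) = x i
    congr 1
    omega
  have e1 : R u (q (q u)) (q u) (q (q (q u))) = R u (q (q u)) u (q (q u)) := hq _ _ _ _
  have e2 : R u (q (q u)) (q (q u)) (q (q (q (q u)))) = R u (q (q u)) (q u) (q (q (q u))) :=
    hq _ _ _ _
  rw [q4] at e2
  have e3 : R u (q (q u)) (q (q u)) u = - R u (q (q u)) u (q (q u)) := hsym.2.1 _ _ _ _
  have key : R u (q (q u)) u (q (q u)) = 0 := by linarith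
  exact ⟨by simp [mu, key], key⟩
end
end

section
/- Assume R(x,y,qz,qu) = R(x,y,z,u) for all x,y,z,u. Assume A > C > B > 0, let x ∈ ℝ⁴ satisfy g(x,x) = 1, g(x,qx) = 0, g(x,q²x) = 0 (g-orthonormal q-basis), and let u be a vector with g(u,u) = 1 inducing a q-basis. Set cφ = g(u,qu) and cθ = g(u,q²u). Then μ(u,qu) = ((1−cθ)²/(1−cφ²))·μ(x,qx). -/
noncomputable section

/-! ### Auxiliary material -/

/-- Standard basis vectors of `V`. -/
def eps (j : Fin 4) : V := fun i => if i = j then 1 else 0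

/-- The `q`-invariant 2-form on `V`. -/
def omg (z u : V) : ℝ :=
  (z 0 * u 1 + z 1 * u 2 + z 2 * u 3 + z 3 * u 0) -
  (z 1 * u 0 + z 2 * u 1 + z 3 * u 2 + z 0 * u 3)

lemma q_eps0 : q (eps 0) = eps 3 := by funext i; fin_cases i <;> simp [q, eps]
lemma q_eps1 : q (eps 1) = eps 0 := by funext i; fin_cases i <;> simp [q, eps]
lemma q_eps2 : q (eps 2) = eps 1 := by funext i; fin_cases i <;> simp [q, eps]
lemma q_eps3 : q (eps 3) = eps 2 := by funext i; fin_cases i <;> simp [q, eps]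

lemma decomp (v : V) : v = v 0 • eps 0 + v 1 • eps 1 + v 2 • eps 2 + v 3 • eps 3 := by
  funext i; fin_cases i <;> simp [eps]

lemma bilin_expand (F : V → V → ℝ)
    (h1 : ∀ a a' b, F (a + a') b = F a b + F a' b)
    (h2 : ∀ (c : ℝ) a b, F (c • a) b = c * F a b)
    (h3 : ∀ a b b', F a (b + b') = F a b + F a b')
    (h4 : ∀ (c : ℝ) a b, F a (c • b) = c * F a b)
    (z u : V) :
    F z u =
      z 0 * u 0 * F (eps 0) (eps 0) + z 0 * u 1 * F (eps 0) (eps 1) +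
      z 0 * u 2 * F (eps 0) (eps 2) + z 0 * u 3 * F (eps 0) (eps 3) +
      z 1 * u 0 * F (eps 1) (eps 0) + z 1 * u 1 * F (eps 1) (eps 1) +
      z 1 * u 2 * F (eps 1) (eps 2) + z 1 * u 3 * F (eps 1) (eps 3) +
      z 2 * u 0 * F (eps 2) (eps 0) + z 2 * u 1 * F (eps 2) (eps 1) +
      z 2 * u 2 * F (eps 2) (eps 2) + z 2 * u 3 * F (eps 2) (eps 3) +
      z 3 * u 0 * F (eps 3) (eps 0) + z 3 * u 1 * F (eps 3) (eps 1) +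
      z 3 * u 2 * F (eps 3) (eps 2) + z 3 * u 3 * F (eps 3) (eps 3) := by
  conv_lhs => rw [decomp z, decomp u]
  simp only [h1, h2, h3, h4]
  ring

/-- An antisymmetric bilinear form on `V` invariant under `q` is a multiple of `omg`. -/
lemma inv_form (F : V → V → ℝ)
    (h1 : ∀ a a' b, F (a + a') b = F a b + F a' b)
    (h2 : ∀ (c : ℝ) a b, F (c • a) b = c * F a b)
    (h3 : ∀ a b b', F a (b + b') = F a b + F a b')
    (h4 : ∀ (c : ℝ) a b, F a (c • b) = c * F a b)
    (hanti : ∀ z u, F z u = - F u z)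
    (hinv : ∀ z u, F (q z) (q u) = F z u)
    (z u : V) :
    F z u = F (eps 0) (eps 1) * omg z u := by
  have h01 := hinv (eps 1) (eps 2); rw [q_eps1, q_eps2] at h01
  have h12 := hinv (eps 2) (eps 3); rw [q_eps2, q_eps3] at h12
  have h23 := hinv (eps 3) (eps 0); rw [q_eps3, q_eps0] at h23
  -- h01 : F e0 e1 = F e1 e2 , h12 : F e1 e2 = F e2 e3 , h23 : F e2 e3 = F e3 e0
  have h13a := hinv (eps 2) (eps 0); rw [q_eps2, q_eps0] at h13a
  -- h13a : F e1 e3 = F e2 e0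
  have h13b := hinv (eps 3) (eps 1); rw [q_eps3, q_eps1] at h13b
  -- h13b : F e2 e0 = F e3 e1
  have h13 : F (eps 1) (eps 3) = 0 := by
    have := hanti (eps 3) (eps 1)
    have := hanti (eps 1) (eps 3)
    linarith [h13a, h13b]
  have h02 : F (eps 0) (eps 2) = 0 := by
    have := hinv (eps 1) (eps 3); rw [q_eps1, q_eps3] at this
    rw [this, h13]
  have d0 : F (eps 0) (eps 0) = 0 := by linarith [hanti (eps 0) (eps 0)]
  have d1 : F (eps 1) (eps 1) = 0 := by linarith [hanti (eps 1) (eps 1)]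
  have d2 : F (eps 2) (eps 2) = 0 := by linarith [hanti (eps 2) (eps 2)]
  have d3 : F (eps 3) (eps 3) = 0 := by linarith [hanti (eps 3) (eps 3)]
  have e12 : F (eps 1) (eps 2) = F (eps 0) (eps 1) := h01.symm
  have e23 : F (eps 2) (eps 3) = F (eps 0) (eps 1) := (h01.trans h12).symm
  have e03 : F (eps 0) (eps 3) = - F (eps 0) (eps 1) := by
    rw [hanti, ← h23, ← h12, ← h01]
  rw [bilin_expand F h1 h2 h3 h4 z u]
  simp only [d0, d1, d2, d3, h02, h13, hanti (eps 1) (eps 0), hanti (eps 2) (eps 0),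
    hanti (eps 2) (eps 1), hanti (eps 3) (eps 0), hanti (eps 3) (eps 1),
    hanti (eps 3) (eps 2), e12, e23, e03, neg_zero, neg_neg]
  unfold omg
  ring

/-- Structure theorem: `R = λ · omg ⊗ omg`. -/
lemma key (R : V → V → V → V → ℝ) (hml : MultilinearR R) (hsym : CurvSymm R)
    (hq : ∀ x y z u, R x y (q z) (q u) = R x y z u) (x y z u : V) :
    R x y z u = R (eps 0) (eps 1) (eps 0) (eps 1) * (omg x y * omg z u) := by
  obtain ⟨m1, m2, m3, m4, m5, m6, m7, m8⟩ := hml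
  obtain ⟨s1, s2, s3, _⟩ := hsym
  have step1 : ∀ x y z u, R x y z u = R x y (eps 0) (eps 1) * omg z u := by
    intro x y z u
    exact inv_form (R x y) (m5 x y) (fun c => m6 c x y) (m7 x y) (fun c => m8 c x y)
      (fun z u => s2 x y z u) (hq x y) z u
  have step2 : R x y (eps 0) (eps 1) =
      R (eps 0) (eps 1) (eps 0) (eps 1) * omg x y := by
    refine inv_form (fun a b => R a b (eps 0) (eps 1))
      (fun a a' b => m1 a a' b _ _) (fun c a b => m2 c a b _ _)
      (fun a b b' => m3 a b b' _ _) (fun c a b => m4 c a b _ _)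
      (fun a b => s1 a b _ _) ?_ x y
    intro a b
    calc R (q a) (q b) (eps 0) (eps 1) = R (eps 0) (eps 1) (q a) (q b) := s3 _ _ _ _
      _ = R (eps 0) (eps 1) a b := hq _ _ _ _
      _ = R a b (eps 0) (eps 1) := (s3 _ _ _ _).symm
  rw [step1 x y z u, step2]; ring

lemma g_expand (A B C : ℝ) (v w : V) : g A B C v w =
    v 0 * (A * w 0 + B * w 1 + C * w 2 + B * w 3) +
    v 1 * (B * w 0 + A * w 1 + B * w 2 + C * w 3) +
    v 2 * (C * w 0 + B * w 1 + A * w 2 + B * w 3) +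
    v 3 * (B * w 0 + C * w 1 + B * w 2 + A * w 3) := by
  simp [g, G, Matrix.mulVec, dotProduct, Fin.sum_univ_four,
    Matrix.cons_val_zero, Matrix.cons_val_one, Matrix.head_cons]

lemma q_apply0 (v : V) : q v 0 = v 1 := rfl
lemma q_apply1 (v : V) : q v 1 = v 2 := rfl
lemma q_apply2 (v : V) : q v 2 = v 3 := rfl
lemma q_apply3 (v : V) : q v 3 = v 0 := rfl

lemma g_q_inv (A B C : ℝ) (v w : V) : g A B C (q v) (q w) = g A B C v w := by
  rw [g_expand, g_expand, q_apply0, q_apply1, q_apply2, q_apply3,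
    q_apply0, q_apply1, q_apply2, q_apply3]
  ring

/-- Key link between `omg` and `g`. -/
lemma omg_g (A B C : ℝ) (v : V) :
    (A - C) * omg v (q v) = -(g A B C v v - g A B C v (q (q v))) := by
  rw [g_expand, g_expand]
  simp only [q_apply0, q_apply1, q_apply2, q_apply3, omg]
  ring

theorem stmt11 (A B C : ℝ) (R : V → V → V → V → ℝ)
    (hml : MultilinearR R) (hsym : CurvSymm R)
    (hq : ∀ x y z u, R x y (q z) (q u) = R x y z u)
    (h1 : A > C) (h2 : C > B) (h3 : B > 0)
    (x : V) (hx1 : g A B C x x = 1) (hx2 : g A B C x (q x) = 0)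
    (hx3 : g A B C x (q (q x)) = 0)
    (u : V) (hu : inducesQBasis u) (hu1 : g A B C u u = 1) :
    mu A B C R u (q u) =
      ((1 - g A B C u (q (q u))) ^ 2 / (1 - (g A B C u (q u)) ^ 2)) *
        mu A B C R x (q x) := by
  set lam := R (eps 0) (eps 1) (eps 0) (eps 1) with hlam
  set k := A - C with hk
  set p := omg u (q u) with hp
  set r := omg x (q x) with hr
  have hkp : k * p = -(1 - g A B C u (q (q u))) := by
    rw [hp, hk, omg_g A B C u, hu1]
    try norm_num
  have hkr : k * r = -1 := by
    rw [hr, hk, omg_g A B C x, hx1, hx3]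
    try norm_num
  have hRu : R u (q u) u (q u) = lam * (p * p) := by
    rw [key R hml hsym hq, ← hp, ← hlam]
  have hRx : R x (q x) x (q x) = lam * (r * r) := by
    rw [key R hml hsym hq, ← hr, ← hlam]
  have hgu : g A B C (q u) (q u) = 1 := by rw [g_q_inv, hu1]
  have hgx : g A B C (q x) (q x) = 1 := by rw [g_q_inv, hx1]
  unfold mu
  rw [hRu, hRx, hgu, hgx, hu1, hx1, hx2]
  have h1cθ : (1 - g A B C u (q (q u))) = -(k * p) := by rw [hkp]; ring
  rw [h1cθ]
  rw [show (1:ℝ) * 1 - (0:ℝ) ^ 2 = 1 by norm_num, div_one,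
    show (1:ℝ) * 1 - g A B C u (q u) ^ 2 = 1 - g A B C u (q u) ^ 2 by ring]
  rw [div_mul_eq_mul_div]
  congr 1
  linear_combination (1 - k * r) * lam * p ^ 2 * hkr
end
end

section
/- Assume R is q-invariant (R(qx,qy,qz,qu) = R(x,y,z,u) for all x,y,z,u). Then for every x ∈ ℝ⁴: R(x,q²x,qx,q³x) = 0. -/
noncomputable section

theorem stmt18 (R : V → V → V → V → ℝ)
    (hml : MultilinearR R) (hsym : CurvSymm R)
    (hq : ∀ x y z u, R (q x) (q y) (q z) (q u) = R x y z u) (x : V) :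
    R x (q (q x)) (q x) (q (q (q x))) = 0 := by
  obtain ⟨h1, h2, h3, h4⟩ := hsym
  have hq4 : q (q (q (q x))) = x := by
    funext i; fin_cases i <;> rfl
  have hcyc : R (q x) (q (q x)) (q (q (q x))) x = R x (q x) (q (q x)) (q (q (q x))) := by
    have := hq x (q x) (q (q x)) (q (q (q x)))
    rwa [hq4] at this
  have hb := h4 x (q x) (q (q x)) (q (q (q x)))
  have e1 : R (q x) (q (q x)) x (q (q (q x))) =
      - R x (q x) (q (q x)) (q (q (q x))) := by
    rw [h2 (q x) (q (q x)) x (q (q (q x))), hcyc]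
  have e2 : R x (q (q x)) (q x) (q (q (q x))) =
      - R (q (q x)) x (q x) (q (q (q x))) := h1 _ _ _ _
  rw [e1] at hb
  linarith [hb, e2]
end
end
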